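/- Let A be an N×N real matrix with nonnegative off-diagonal entries and zero column sums, and let τ > 0. Then every column of (I − τA)^{-1} sums to 1; consequently one implicit Euler step u^{k+1} = (I − τA)^{-1} u^k preserves the sum of the entries of u, for every time step τ > 0. -/
import Mathlib

/-- For an `N × N` real matrix `A` with nonnegative off-diagonal entries and zero
column sums, and any `τ > 0`, every column of `(I − τA)⁻¹` sums to `1`;
consequently one implicit Euler step preserves the sum of the entries of `u`. -/
theorem implicit_euler_preserves_sum (N : ℕ) (A : Matrix (Fin N) (Fin N) ℝ)
    (hoff : ∀ i j, i ≠ j → 0 ≤ A i j) (hsum : ∀ j, ∑ i, A i j = 0)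
    (τ : ℝ) (hτ : 0 < τ) :
    (∀ j, ∑ i, ((1 : Matrix (Fin N) (Fin N) ℝ) - τ • A)⁻¹ i j = 1) ∧
    (∀ u : Fin N → ℝ,
      ∑ i, ((1 : Matrix (Fin N) (Fin N) ℝ) - τ • A)⁻¹.mulVec u i = ∑ i, u i) := by
  set B : Matrix (Fin N) (Fin N) ℝ := (1 : Matrix (Fin N) (Fin N) ℝ) - τ • A with hB
  have hBapp : ∀ i j, B i j = (if i = j then 1 else 0) - τ * A i j := by
    intro i j
    simp [hB, Matrix.one_apply, Matrix.sub_apply]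
  have hdiag : ∀ k, A k k = -∑ i ∈ Finset.univ.erase k, A i k := by
    intro k
    have := hsum k
    rw [← Finset.add_sum_erase _ _ (Finset.mem_univ k)] at this
    linarith
  have hdet : B.det ≠ 0 := by
    apply det_ne_zero_of_sum_col_lt_diag
    intro k
    have h1 : ∀ i ∈ Finset.univ.erase k, ‖B i k‖ = τ * A i k := by
      intro i hi
      have hik : i ≠ k := Finset.ne_of_mem_erase hi
      rw [hBapp, if_neg hik]
      rw [Real.norm_eq_abs, abs_of_nonpos (by nlinarith [hoff i k hik])]
      ring
    rw [Finset.sum_congr rfl h1]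
    have h2 : B k k = 1 + τ * ∑ i ∈ Finset.univ.erase k, A i k := by
      rw [hBapp, if_pos rfl, hdiag k]; ring
    have h3 : 0 ≤ ∑ i ∈ Finset.univ.erase k, τ * A i k :=
      Finset.sum_nonneg fun i hi => by
        have := hoff i k (Finset.ne_of_mem_erase hi); positivity
    rw [h2, Real.norm_eq_abs, ← Finset.mul_sum] at *
    rw [abs_of_pos (by linarith)]
    linarith
  have hcolB : ∀ j, ∑ i, B i j = 1 := by
    intro j
    have : ∑ i, B i j = (∑ i, (if i = j then (1:ℝ) else 0)) - τ * ∑ i, A i j := by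
      rw [Finset.mul_sum, ← Finset.sum_sub_distrib]
      exact Finset.sum_congr rfl fun i _ => hBapp i j
    rw [this, hsum j]
    simp
  have hmul : B * B⁻¹ = 1 := Matrix.mul_nonsing_inv B (isUnit_iff_ne_zero.mpr hdet)
  have hcol : ∀ j, ∑ i, B⁻¹ i j = 1 := by
    intro j
    calc ∑ i, B⁻¹ i j = ∑ i, (∑ k, B k i) * B⁻¹ i j := by
          simp_rw [hcolB, one_mul]
      _ = ∑ k, ∑ i, B k i * B⁻¹ i j := by
          simp_rw [Finset.sum_mul]; rw [Finset.sum_comm]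
      _ = ∑ k, (B * B⁻¹) k j := by
          simp [Matrix.mul_apply]
      _ = 1 := by rw [hmul]; simp [Matrix.one_apply, Finset.sum_ite_eq]
  refine ⟨hcol, fun u => ?_⟩
  calc ∑ i, B⁻¹.mulVec u i = ∑ i, ∑ j, B⁻¹ i j * u j := by
        simp [Matrix.mulVec, dotProduct]
    _ = ∑ j, (∑ i, B⁻¹ i j) * u j := by
        rw [Finset.sum_comm]; simp_rw [Finset.sum_mul]
    _ = ∑ j, u j := by simp_rw [hcol, one_mul]
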